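/- The formula A¹Fp is not expressible in TeamLTL(⩔): there is no TeamLTL(⩔)-formula ψ such that for every team (T,i), (T,i) ⊨ ψ if and only if (T,i) ⊨ A¹Fp (i.e., every trace of T eventually satisfies p after time i). Consequently, TeamLTL(⩔) is strictly less expressive than TeamLTL(⩔,A¹). -/

import Mathlib

set_option maxHeartbeats 1000000

universe u

/-- A trace over the set `α` of atomic propositions: an infinite sequence of
sets of propositions. -/
abbrev Trace (α : Type u) := ℕ → Set α

/-- LTL formulae in negation normal form. -/
inductive LTLForm (α : Type u) : Type u where
  | pos : α → LTLForm α
  | neg : α → LTLForm α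
  | lor : LTLForm α → LTLForm α → LTLForm α
  | land : LTLForm α → LTLForm α → LTLForm α
  | next : LTLForm α → LTLForm α
  | luntil : LTLForm α → LTLForm α → LTLForm α
  | wuntil : LTLForm α → LTLForm α → LTLForm α

namespace LTLForm
variable {α : Type u}

/-- Standard single-trace LTL semantics. -/
def sat (t : Trace α) : ℕ → LTLForm α → Prop
  | i, pos p => p ∈ t i
  | i, neg p => p ∉ t i
  | i, lor φ ψ => sat t i φ ∨ sat t i ψ
  | i, land φ ψ => sat t i φ ∧ sat t i ψ
  | i, next φ => sat t (i+1) φ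
  | i, luntil φ ψ => ∃ k, i ≤ k ∧ sat t k ψ ∧ ∀ m, i ≤ m → m < k → sat t m φ
  | i, wuntil φ ψ => ∀ k, i ≤ k → sat t k φ ∨ ∃ m, i ≤ m ∧ m ≤ k ∧ sat t m ψ

/-- Size of an LTL formula. -/
def size : LTLForm α → ℕ
  | pos _ => 1
  | neg _ => 1
  | lor φ ψ => φ.size + ψ.size + 1
  | land φ ψ => φ.size + ψ.size + 1
  | next φ => φ.size + 1
  | luntil φ ψ => φ.size + ψ.size + 1
  | wuntil φ ψ => φ.size + ψ.size + 1

end LTLForm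

/-- Extensions of `TeamLTL` by atoms and connectives:
Boolean disjunction `⩔`, Boolean negation `∼`, inclusion atoms `⊆`,
the universal subteam quantifier `A`, the singleton subteam quantifier `A¹`
and the non-emptiness atom `∼⊥`. -/
inductive TExt : Type where
  | bdis | bneg | incl | asub | asub1 | nebot
deriving DecidableEq

/-- Formulae of TeamLTL together with all the extensions considered in the paper
(fragments are carved out via `TeamForm.exts`). -/
inductive TeamForm (α : Type u) : Type u where
  | pos : α → TeamForm α
  | neg : α → TeamForm α
  | lor : TeamForm α → TeamForm α → TeamForm α
  | land : TeamForm α → TeamForm α → TeamForm α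
  | next : TeamForm α → TeamForm α
  | luntil : TeamForm α → TeamForm α → TeamForm α
  | wuntil : TeamForm α → TeamForm α → TeamForm α
  | bdis : TeamForm α → TeamForm α → TeamForm α
  | bneg : TeamForm α → TeamForm α
  | incl : List (LTLForm α × LTLForm α) → TeamForm α
  | asub : TeamForm α → TeamForm α
  | asub1 : TeamForm α → TeamForm α
  | nebot : TeamForm α

namespace TeamForm
variable {α : Type u}

/-- Synchronous team semantics for (extended) TeamLTL. -/
def sat : Set (Trace α) → ℕ → TeamForm α → Prop
  | T, i, pos p => ∀ t ∈ T, p ∈ t i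
  | T, i, neg p => ∀ t ∈ T, p ∉ t i
  | T, i, lor φ ψ => ∃ T₁ T₂, T₁ ∪ T₂ = T ∧ sat T₁ i φ ∧ sat T₂ i ψ
  | T, i, land φ ψ => sat T i φ ∧ sat T i ψ
  | T, i, next φ => sat T (i+1) φ
  | T, i, luntil φ ψ => ∃ k, i ≤ k ∧ sat T k ψ ∧ ∀ m, i ≤ m → m < k → sat T m φ
  | T, i, wuntil φ ψ => ∀ k, i ≤ k → sat T k φ ∨ ∃ m, i ≤ m ∧ m ≤ k ∧ sat T m ψ
  | T, i, bdis φ ψ => sat T i φ ∨ sat T i ψ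
  | T, i, bneg φ => ¬ sat T i φ
  | T, i, incl ps => ∀ t ∈ T, ∃ t' ∈ T, ∀ p ∈ ps, (LTLForm.sat t i p.1 ↔ LTLForm.sat t' i p.2)
  | T, i, asub φ => ∀ S, S ⊆ T → sat S i φ
  | T, i, asub1 φ => ∀ t ∈ T, sat {t} i φ
  | T, _, nebot => T.Nonempty

/-- The collection of extensions (atoms/connectives beyond core TeamLTL)
occurring in a formula. -/
def exts : TeamForm α → Set TExt
  | pos _ => ∅
  | neg _ => ∅
  | lor φ ψ => exts φ ∪ exts ψ
  | land φ ψ => exts φ ∪ exts ψ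
  | next φ => exts φ
  | luntil φ ψ => exts φ ∪ exts ψ
  | wuntil φ ψ => exts φ ∪ exts ψ
  | bdis φ ψ => insert TExt.bdis (exts φ ∪ exts ψ)
  | bneg φ => insert TExt.bneg (exts φ)
  | incl _ => {TExt.incl}
  | asub φ => insert TExt.asub (exts φ)
  | asub1 φ => insert TExt.asub1 (exts φ)
  | nebot => {TExt.nebot}

/-- Size of an (extended) TeamLTL formula. -/
def size : TeamForm α → ℕ
  | pos _ => 1
  | neg _ => 1
  | lor φ ψ => φ.size + ψ.size + 1
  | land φ ψ => φ.size + ψ.size + 1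
  | next φ => φ.size + 1
  | luntil φ ψ => φ.size + ψ.size + 1
  | wuntil φ ψ => φ.size + ψ.size + 1
  | bdis φ ψ => φ.size + ψ.size + 1
  | bneg φ => φ.size + 1
  | incl ps => (ps.map (fun p => p.1.size + p.2.size)).sum + 1
  | asub φ => φ.size + 1
  | asub1 φ => φ.size + 1
  | nebot => 1

end TeamForm

namespace Stmt15
variable {α : Type u}

/-- The `TeamLTL(⩔,A¹)`-formula `A¹ F p`, where `F φ := ⊤ U φ` and
`⊤ := p ∨ ¬p`. -/
def aFp (p : α) : TeamForm α :=
  TeamForm.asub1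
    (TeamForm.luntil (TeamForm.lor (TeamForm.pos p) (TeamForm.neg p)) (TeamForm.pos p))

/-- Trace with `p` exactly at time `n`. -/
def tr (p : α) (n : ℕ) : Trace α := fun k => if k = n then {p} else ∅

/-- The trace never satisfying `p`. -/
def tinf : Trace α := fun _ => (∅ : Set α)

lemma mem_tr {p q : α} {n i : ℕ} : q ∈ tr p n i ↔ (i = n ∧ q = p) := by
  unfold tr
  by_cases h : i = n <;> simp [h]

/-- Key lemma: a `TeamLTL(⩔)` formula true on an infinite team of traces of the
form `tr p n` remains true after adding the `p`-free trace. -/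
lemma limit_closed (p : α) :
    ∀ ψ : TeamForm α, ψ.exts ⊆ {TExt.bdis} →
      ∀ T : Set (Trace α), T ⊆ Set.range (tr p) → T.Infinite →
        ∀ i, TeamForm.sat T i ψ → TeamForm.sat (insert tinf T) i ψ := by
  intro ψ
  induction ψ with
  | pos q =>
      intro _ T hsub hinf i hsat
      exfalso
      obtain ⟨t₁, ht₁, t₂, ht₂, hne⟩ := hinf.nontrivial
      obtain ⟨n₁, rfl⟩ := hsub ht₁
      obtain ⟨n₂, rfl⟩ := hsub ht₂
      have h₁ := (mem_tr).1 (hsat _ ht₁)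
      have h₂ := (mem_tr).1 (hsat _ ht₂)
      exact hne (by rw [← h₁.1, h₂.1])
  | neg q =>
      intro _ T _ _ i hsat t ht
      rcases ht with rfl | ht
      · simp [tinf]
      · exact hsat t ht
  | lor φ₁ φ₂ ih₁ ih₂ =>
      intro hex T hsub hinf i hsat
      obtain ⟨T₁, T₂, hun, h₁, h₂⟩ := hsat
      have hex₁ : φ₁.exts ⊆ {TExt.bdis} := fun x hx => hex (Or.inl hx)
      have hex₂ : φ₂.exts ⊆ {TExt.bdis} := fun x hx => hex (Or.inr hx)
      have hsub₁ : T₁ ⊆ Set.range (tr p) := fun x hx => hsub (hun ▸ Or.inl hx)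
      have hsub₂ : T₂ ⊆ Set.range (tr p) := fun x hx => hsub (hun ▸ Or.inr hx)
      have : T₁.Infinite ∨ T₂.Infinite := by
        by_contra h
        push_neg at h
        exact hinf (hun ▸ h.1.union h.2)
      rcases this with hT₁ | hT₂
      · exact ⟨insert tinf T₁, T₂, by rw [Set.insert_union, hun],
          ih₁ hex₁ T₁ hsub₁ hT₁ i h₁, h₂⟩
      · exact ⟨T₁, insert tinf T₂, by rw [Set.union_insert, hun],
          h₁, ih₂ hex₂ T₂ hsub₂ hT₂ i h₂⟩
  | land φ₁ φ₂ ih₁ ih₂ =>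
      intro hex T hsub hinf i hsat
      exact ⟨ih₁ (fun x hx => hex (Or.inl hx)) T hsub hinf i hsat.1,
        ih₂ (fun x hx => hex (Or.inr hx)) T hsub hinf i hsat.2⟩
  | next φ ih =>
      intro hex T hsub hinf i hsat
      exact ih hex T hsub hinf (i+1) hsat
  | luntil φ₁ φ₂ ih₁ ih₂ =>
      intro hex T hsub hinf i hsat
      obtain ⟨k, hik, h₂, h₁⟩ := hsat
      exact ⟨k, hik, ih₂ (fun x hx => hex (Or.inr hx)) T hsub hinf k h₂,
        fun m him hmk => ih₁ (fun x hx => hex (Or.inl hx)) T hsub hinf m (h₁ m him hmk)⟩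
  | wuntil φ₁ φ₂ ih₁ ih₂ =>
      intro hex T hsub hinf i hsat k hik
      rcases hsat k hik with h | ⟨m, him, hmk, h⟩
      · exact Or.inl (ih₁ (fun x hx => hex (Or.inl hx)) T hsub hinf k h)
      · exact Or.inr ⟨m, him, hmk, ih₂ (fun x hx => hex (Or.inr hx)) T hsub hinf m h⟩
  | bdis φ₁ φ₂ ih₁ ih₂ =>
      intro hex T hsub hinf i hsat
      have hex' : φ₁.exts ∪ φ₂.exts ⊆ {TExt.bdis} :=
        fun x hx => hex (Set.mem_insert_iff.mpr (Or.inr hx))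
      rcases hsat with h | h
      · exact Or.inl (ih₁ (fun x hx => hex' (Or.inl hx)) T hsub hinf i h)
      · exact Or.inr (ih₂ (fun x hx => hex' (Or.inr hx)) T hsub hinf i h)
  | bneg φ ih =>
      intro hex
      exact absurd (hex (Set.mem_insert _ _)) (by simp)
  | incl ps =>
      intro hex
      exact absurd (hex rfl) (by simp)
  | asub φ ih =>
      intro hex
      exact absurd (hex (Set.mem_insert _ _)) (by simp)
  | asub1 φ ih =>
      intro hex
      exact absurd (hex (Set.mem_insert _ _)) (by simp)
  | nebot =>
      intro hex
      exact absurd (hex rfl) (by simp)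

/-- The semantics of `A¹ F p`. -/
lemma aFp_sat (p : α) (T : Set (Trace α)) (i : ℕ) :
    TeamForm.sat T i (aFp p) ↔ ∀ t ∈ T, ∃ k, i ≤ k ∧ p ∈ t k := by
  unfold aFp
  show (∀ t ∈ T, TeamForm.sat {t} i _) ↔ _
  refine forall₂_congr fun t ht => ?_
  constructor
  · rintro ⟨k, hik, hk, -⟩
    exact ⟨k, hik, hk t rfl⟩
  · rintro ⟨k, hik, hk⟩
    refine ⟨k, hik, fun s hs => by rw [Set.mem_singleton_iff] at hs; rwa [hs], ?_⟩
    intro m _ _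
    by_cases hm : p ∈ t m
    · exact ⟨{t}, ∅, by simp, fun s hs => by rw [Set.mem_singleton_iff] at hs; rwa [hs],
        fun s hs => absurd hs (Set.notMem_empty s)⟩
    · exact ⟨∅, {t}, by simp, fun s hs => absurd hs (Set.notMem_empty s),
        fun s hs => by rw [Set.mem_singleton_iff] at hs; rwa [hs]⟩

/-- The formula `A¹ F p` is not expressible in `TeamLTL(⩔)`:
there is no `TeamLTL(⩔)`-formula `ψ` satisfied by exactly those teams `(T,i)`
in which every trace of `T` eventually satisfies `p` after time `i`
(which are exactly the teams satisfying `A¹ F p`).  Consequently,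
`TeamLTL(⩔)` is strictly less expressive than `TeamLTL(⩔,A¹)`. -/
theorem stmt_15 (p : α) :
    -- `A¹ F p` indeed expresses the stated property
    (∀ (T : Set (Trace α)) (i : ℕ),
        TeamForm.sat T i (aFp p) ↔ ∀ t ∈ T, ∃ k, i ≤ k ∧ p ∈ t k) ∧
    -- `A¹ F p` is not expressible in `TeamLTL(⩔)`
    (¬ ∃ ψ : TeamForm α, ψ.exts ⊆ {TExt.bdis} ∧
        ∀ (T : Set (Trace α)) (i : ℕ),
          TeamForm.sat T i ψ ↔ TeamForm.sat T i (aFp p)) ∧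
    -- and `TeamLTL(⩔)` is at most as expressive as `TeamLTL(⩔,A¹)`,
    -- hence strictly less expressive
    (∀ φ : TeamForm α, φ.exts ⊆ {TExt.bdis} →
        ∃ ψ : TeamForm α, ψ.exts ⊆ {TExt.bdis, TExt.asub1} ∧
          ∀ (T : Set (Trace α)) (i : ℕ),
            TeamForm.sat T i φ ↔ TeamForm.sat T i ψ) := by
  refine ⟨aFp_sat p, ?_, ?_⟩
  · rintro ⟨ψ, hex, hψ⟩
    have htr_inj : Function.Injective (tr p) := by
      intro n m hnm
      by_contra hne
      have : p ∈ tr p n n := mem_tr.2 ⟨rfl, rfl⟩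
      rw [hnm] at this
      exact absurd (mem_tr.1 this).1 hne
    have hinf : (Set.range (tr p)).Infinite := Set.infinite_range_of_injective htr_inj
    have hsatT : TeamForm.sat (Set.range (tr p)) 0 ψ := by
      rw [hψ, aFp_sat]
      rintro t ⟨n, rfl⟩
      exact ⟨n, Nat.zero_le n, mem_tr.2 ⟨rfl, rfl⟩⟩
    have hlim := limit_closed p ψ hex (Set.range (tr p)) (fun x hx => hx) hinf 0 hsatT
    rw [hψ, aFp_sat] at hlim
    obtain ⟨k, -, hk⟩ := hlim tinf (Set.mem_insert _ _)
    exact hk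
  · intro φ hex
    exact ⟨φ, fun x hx => Or.inl (by simpa using hex hx), fun T i => Iff.rfl⟩

end Stmt15
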